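/- Proposition 4.3 (epsilon-net extension for the spectral norm of a random matrix). Let n, r ≥ 1, b₀ ≥ 0 and p₀ ∈ [0,1]. Let M be a random n×r real matrix (a measurable map from a probability space into n×r matrices) such that for every fixed unit vectors w ∈ ℝⁿ and z ∈ ℝ^r, the probability that |wᵀMz| > b₀ is at most p₀. Then the probability that sup over unit vectors w ∈ ℝⁿ, z ∈ ℝ^r of |wᵀMz| exceeds 1.4·b₀ is at most 17^{n+r}·p₀; i.e., with probability at least 1 − 17^{n+r}·p₀, the spectral norm satisfies ‖M‖ ≤ 1.4·b₀. -/

import Mathlib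

open MeasureTheory ProbabilityTheory Matrix
open scoped ENNReal

noncomputable section

/-- Euclidean norm of a finitely-indexed real vector. -/
def vnorm {ι : Type*} [Fintype ι] (v : ι → ℝ) : ℝ := Real.sqrt (∑ i, v i ^ 2)

/-- Frobenius norm of a real matrix. -/
def frob {ι ι' : Type*} [Fintype ι] [Fintype ι'] (M : Matrix ι ι' ℝ) : ℝ :=
  Real.sqrt (∑ i, ∑ j, M i j ^ 2)

/-- Spectral (ℓ2 operator) norm of a real matrix. -/
def spec {ι ι' : Type*} [Fintype ι] [Fintype ι'] (M : Matrix ι ι' ℝ) : ℝ :=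
  sSup {c | ∃ z, vnorm z = 1 ∧ c = vnorm (M.mulVec z)}

/-- Smallest singular value of an r×q matrix with r ≤ q (or of a square matrix):
the minimum of ‖Bᵀw‖ over unit vectors w. -/
def sigMin {ι ι' : Type*} [Fintype ι] [Fintype ι'] (B : Matrix ι ι' ℝ) : ℝ :=
  sInf {c | ∃ w, vnorm w = 1 ∧ c = vnorm (Bᵀ.mulVec w)}

/-- The k-th column of a matrix. -/
def matCol {ι ι' : Type*} (B : Matrix ι ι' ℝ) (k : ι') : ι → ℝ := fun i => B i k

/-- Subspace distance SD(U₁,U₂) := ‖(I − U₁U₁ᵀ)U₂‖_F. -/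
def SD {n r : ℕ} (U₁ U₂ : Matrix (Fin n) (Fin r) ℝ) : ℝ :=
  frob ((1 - U₁ * U₁ᵀ) * U₂)

/-- The standard Gaussian measure on ℝ. -/
def stdGaussian : Measure ℝ := gaussianReal 0 1

instance : IsProbabilityMeasure stdGaussian :=
  inferInstanceAs (IsProbabilityMeasure (gaussianReal 0 1))

/-- A standard Gaussian random vector in ℝⁿ (i.i.d. N(0,1) coordinates). -/
def gaussianVec (n : ℕ) : Measure (Fin n → ℝ) := Measure.pi fun _ => stdGaussian

instance (n : ℕ) : IsProbabilityMeasure (gaussianVec n) := by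
  unfold gaussianVec; infer_instance

/-- i.i.d. standard Gaussian random vectors a_{k i} ∈ ℝⁿ, k ∈ [q], i ∈ [m]. -/
def gaussianMatrices (q m n : ℕ) : Measure (Fin q → Fin m → Fin n → ℝ) :=
  Measure.pi fun _ => Measure.pi fun _ => gaussianVec n

instance (q m n : ℕ) : IsProbabilityMeasure (gaussianMatrices q m n) := by
  unfold gaussianMatrices; infer_instance

/-- Truncated spectral-initialization matrix X̂₀ = (1/m) Σ_{k,i} a_ki y_ki 1{y_ki² ≤ α} e_kᵀ. -/
def initMat {n q m : ℕ} (xstar : Fin q → Fin n → ℝ) (α : ℝ)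
    (ω : Fin q → Fin m → Fin n → ℝ) : Matrix (Fin n) (Fin q) ℝ :=
  Matrix.of fun j k => (1 / (m : ℝ)) * ∑ i, ω k i j * (ω k i ⬝ᵥ xstar k) *
    (if (ω k i ⬝ᵥ xstar k) ^ 2 ≤ α then 1 else 0)

/-- Data-dependent truncation threshold α := C̃ Σ_{k,i} y_ki² / (mq). -/
def initAlpha {n q m : ℕ} (xstar : Fin q → Fin n → ℝ) (Ctil : ℝ)
    (ω : Fin q → Fin m → Fin n → ℝ) : ℝ :=
  Ctil * ((∑ k, ∑ i, (ω k i ⬝ᵥ xstar k) ^ 2) / ((m : ℝ) * q))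

/-- β(α) := E[ζ² 1{‖x‖² ζ² ≤ α}] for ζ standard Gaussian. -/
def betaK (normx α : ℝ) : ℝ :=
  ∫ z, z ^ 2 * (if normx ^ 2 * z ^ 2 ≤ α then 1 else 0) ∂stdGaussian

/-- The least-squares estimate b̂ := (UᵀAᵀAU)⁻¹ Uᵀ Aᵀ A x. -/
def lsEst {n r m : ℕ} (U : Matrix (Fin n) (Fin r) ℝ) (A : Matrix (Fin m) (Fin n) ℝ)
    (x : Fin n → ℝ) : Fin r → ℝ :=
  ((Uᵀ * Aᵀ * A * U)⁻¹ * Uᵀ * Aᵀ * A).mulVec x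

/-- Gradient w.r.t. U of the squared loss: Σ_k Aᵀ(AUb̂_k − Ax*_k)b̂_kᵀ. -/
def gradU {n r q m : ℕ} (U : Matrix (Fin n) (Fin r) ℝ)
    (A : Fin q → Matrix (Fin m) (Fin n) ℝ) (xstar : Fin q → Fin n → ℝ)
    (bhat : Fin q → Fin r → ℝ) : Matrix (Fin n) (Fin r) ℝ :=
  ∑ k, (A k)ᵀ * vecMulVec ((A k).mulVec (U.mulVec (bhat k) - xstar k)) (bhat k)

/-- `U` has orthonormal columns whose span is the span of eigenvectors of `S`
corresponding to its `r` largest eigenvalues: `S` maps the column span of `U` into itself,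
and wᵀSw ≥ zᵀSz for unit w in the span and unit z orthogonal to it. -/
def IsTopREigenBasis {n r : ℕ} (S : Matrix (Fin n) (Fin n) ℝ)
    (U : Matrix (Fin n) (Fin r) ℝ) : Prop :=
  Uᵀ * U = 1 ∧ (∃ M : Matrix (Fin r) (Fin r) ℝ, S * U = U * M) ∧
  ∀ w z : Fin n → ℝ, (∃ cvec : Fin r → ℝ, w = U.mulVec cvec) → Uᵀ.mulVec z = 0 →
    vnorm w = 1 → vnorm z = 1 → z ⬝ᵥ S.mulVec z ≤ w ⬝ᵥ S.mulVec w

/-- Sample sizes for the 2T+1 sample splits: batch τ ∈ {0,…,T} has m τ rows,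
batch τ = T + t (t ∈ {1,…,T}) has m t rows. -/
def msize (m : ℕ → ℕ) (T τ : ℕ) : ℕ := if τ ≤ T then m τ else m (τ - T)

/-- The joint distribution of all 2T+1 independent sample batches of i.i.d. standard
Gaussian measurement vectors. -/
def splitGauss (m : ℕ → ℕ) (T q n : ℕ) :
    Measure (∀ τ : Fin (2 * T + 1), Fin q → Fin (msize m T τ.1) → Fin n → ℝ) :=
  Measure.pi fun τ => gaussianMatrices q (msize m T τ.1) n

instance (m : ℕ → ℕ) (T q n : ℕ) : IsProbabilityMeasure (splitGauss m T q n) := by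
  unfold splitGauss; infer_instance

end
open Metric

section AuxNet

lemma vnorm_eq {d : ℕ} (v : EuclideanSpace ℝ (Fin d)) : vnorm (fun i => v i) = ‖v‖ := by
  simp [vnorm, EuclideanSpace.norm_eq, Real.norm_eq_abs, sq_abs]

lemma vnorm_nonneg {ι : Type*} [Fintype ι] (v : ι → ℝ) : 0 ≤ vnorm v := Real.sqrt_nonneg _

lemma vnorm_smul {ι : Type*} [Fintype ι] (c : ℝ) (v : ι → ℝ) :
    vnorm (c • v) = |c| * vnorm v := by
  unfold vnorm
  rw [← Real.sqrt_sq_eq_abs, ← Real.sqrt_mul (sq_nonneg c), Finset.mul_sum]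
  congr 1; apply Finset.sum_congr rfl; intro i _
  simp [Pi.smul_apply, mul_pow]

lemma vnorm_eq_zero {ι : Type*} [Fintype ι] {v : ι → ℝ} (h : vnorm v = 0) : v = 0 := by
  have h2 : ∑ i, v i ^ 2 = 0 := by
    exact le_antisymm (Real.sqrt_eq_zero'.mp h) (Finset.sum_nonneg fun i _ => sq_nonneg _)
  funext i
  have := (Finset.sum_eq_zero_iff_of_nonneg (fun i _ => sq_nonneg (v i))).mp h2 i (Finset.mem_univ i)
  exact pow_eq_zero_iff (by norm_num) |>.mp this

lemma packing (d : ℕ) (hd : 1 ≤ d) (S : Finset (EuclideanSpace ℝ (Fin d)))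
    (hS : ∀ x ∈ S, ‖x‖ = 1)
    (hsep : ∀ x ∈ S, ∀ y ∈ S, x ≠ y → (1:ℝ)/8 ≤ dist x y) : S.card ≤ 17 ^ d := by
  set μ : Measure (EuclideanSpace ℝ (Fin d)) := volume with hμ
  have hV0 : μ (ball 0 1) ≠ 0 := (measure_ball_pos μ 0 one_pos).ne'
  have hVt : μ (ball 0 1) ≠ ⊤ := measure_ball_lt_top.ne
  have hdisj : (S : Set (EuclideanSpace ℝ (Fin d))).PairwiseDisjoint (fun x => ball x (1/16)) := by
    intro x hx y hy hxy
    exact ball_disjoint_ball (by linarith [hsep x hx y hy hxy] : (1:ℝ)/16 + 1/16 ≤ dist x y)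
  have hsub : (⋃ x ∈ S, ball x (1/16)) ⊆ ball (0 : EuclideanSpace ℝ (Fin d)) (17/16) := by
    intro z hz
    simp only [Set.mem_iUnion] at hz
    obtain ⟨x, hx, hzx⟩ := hz
    rw [mem_ball] at hzx ⊢
    calc dist z 0 ≤ dist z x + dist x 0 := dist_triangle _ _ _
      _ < 1/16 + 1 := by
          have : dist x 0 = 1 := by rw [dist_zero_right]; exact hS x hx
          linarith
      _ = 17/16 := by norm_num
  have hball : ∀ x : EuclideanSpace ℝ (Fin d), μ (ball x (1/16)) = ENNReal.ofReal ((1/16 : ℝ)^d) * μ (ball 0 1) := by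
    intro x
    rw [Measure.addHaar_ball_of_pos μ x (by norm_num : (0:ℝ) < 1/16)]
    congr 2
    rw [finrank_euclideanSpace_fin]
  have key : (S.card : ℝ≥0∞) * (ENNReal.ofReal ((1/16:ℝ)^d) * μ (ball 0 1))
      ≤ ENNReal.ofReal ((17/16:ℝ)^d) * μ (ball 0 1) := by
    calc (S.card : ℝ≥0∞) * (ENNReal.ofReal ((1/16:ℝ)^d) * μ (ball 0 1))
        = ∑ x ∈ S, μ (ball x (1/16)) := by
          rw [Finset.sum_congr rfl (fun x _ => hball x), Finset.sum_const, nsmul_eq_mul]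
      _ = μ (⋃ x ∈ S, ball x (1/16)) :=
          (measure_biUnion_finset hdisj (fun x _ => measurableSet_ball)).symm
      _ ≤ μ (ball (0:EuclideanSpace ℝ (Fin d)) (17/16)) := measure_mono hsub
      _ = ENNReal.ofReal ((17/16:ℝ)^d) * μ (ball 0 1) := by
          rw [Measure.addHaar_ball_of_pos μ _ (by norm_num : (0:ℝ) < 17/16),
            finrank_euclideanSpace_fin]
  rw [← mul_assoc, ENNReal.mul_le_mul_iff_left hV0 hVt] at key
  have key2 : (S.card : ℝ) * (1/16:ℝ)^d ≤ (17/16:ℝ)^d := by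
    rw [← ENNReal.ofReal_le_ofReal_iff (by positivity), ENNReal.ofReal_mul (by positivity)]
    simpa [ENNReal.ofReal_natCast] using key
  have key3 : (S.card : ℝ) ≤ (17:ℝ)^d := by
    have h16 : (0:ℝ) < (1/16:ℝ)^d := by positivity
    rw [← mul_le_mul_iff_left₀ h16]
    calc (S.card : ℝ) * (1/16:ℝ)^d ≤ (17/16:ℝ)^d := key2
      _ = (17:ℝ)^d * (1/16:ℝ)^d := by rw [← mul_pow]; norm_num
  have : (S.card : ℝ) ≤ ((17 ^ d : ℕ) : ℝ) := by push_cast; exact key3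
  exact_mod_cast this

lemma exists_net (d : ℕ) (hd : 1 ≤ d) :
    ∃ S : Finset (EuclideanSpace ℝ (Fin d)), S.card ≤ 17 ^ d ∧ (∀ x ∈ S, ‖x‖ = 1) ∧
      ∀ x : EuclideanSpace ℝ (Fin d), ‖x‖ = 1 → ∃ y ∈ S, dist x y ≤ 1/8 := by
  classical
  set P : ℕ → Prop := fun k => ∃ S : Finset (EuclideanSpace ℝ (Fin d)), (∀ x ∈ S, ‖x‖ = 1) ∧
    (∀ x ∈ S, ∀ y ∈ S, x ≠ y → (1:ℝ)/8 ≤ dist x y) ∧ S.card = k with hP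
  have hP0 : P 0 := ⟨∅, by simp, by simp, rfl⟩
  set N := Nat.findGreatest P (17 ^ d) with hN
  have hPN : P N := Nat.findGreatest_spec (Nat.zero_le _) hP0
  obtain ⟨S, hS1, hS2, hScard⟩ := hPN
  refine ⟨S, hScard ▸ (packing d hd S hS1 hS2), hS1, ?_⟩
  intro x hx
  by_contra hcon
  push_neg at hcon
  have hxS : x ∉ S := fun h => by
    have := hcon x h; simp at this; linarith
  have hS'1 : ∀ a ∈ insert x S, ‖a‖ = 1 := by
    intro a ha
    rcases Finset.mem_insert.mp ha with ha' | ha'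
    · exact ha' ▸ hx
    · exact hS1 a ha'
  have hS'2 : ∀ a ∈ insert x S, ∀ b ∈ insert x S, a ≠ b → (1:ℝ)/8 ≤ dist a b := by
    intro a ha b hb hab
    rcases Finset.mem_insert.mp ha with ha' | ha' <;>
      rcases Finset.mem_insert.mp hb with hb' | hb'
    · exact absurd (ha'.trans hb'.symm) hab
    · subst ha'; exact (hcon b hb').le
    · subst hb'; rw [dist_comm]; exact (hcon a ha').le
    · exact hS2 a ha' b hb' hab
  have hcard' : (insert x S).card = N + 1 := by
    rw [Finset.card_insert_of_notMem hxS, hScard]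
  have hle : N + 1 ≤ 17 ^ d := hcard' ▸ packing d hd _ hS'1 hS'2
  have : N + 1 ≤ N := Nat.le_findGreatest hle ⟨insert x S, hS'1, hS'2, hcard'⟩
  omega

lemma dot_bound_left {n r : ℕ} (A : Matrix (Fin n) (Fin r) ℝ) (s : ℝ) (hs0 : 0 ≤ s)
    (hs : ∀ w z, vnorm w = 1 → vnorm z = 1 → |w ⬝ᵥ A.mulVec z| ≤ s)
    (a : Fin n → ℝ) (z : Fin r → ℝ) (hz : vnorm z = 1) :
    |a ⬝ᵥ A.mulVec z| ≤ vnorm a * s := by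
  by_cases h0 : vnorm a = 0
  · rw [vnorm_eq_zero h0]; simp [vnorm, hs0]
  · have hpos : 0 < vnorm a := lt_of_le_of_ne (vnorm_nonneg a) (Ne.symm h0)
    have hu : vnorm ((vnorm a)⁻¹ • a) = 1 := by
      rw [vnorm_smul, abs_inv, abs_of_pos hpos, inv_mul_cancel₀ h0]
    have ha : a = vnorm a • ((vnorm a)⁻¹ • a) := by
      rw [smul_smul, mul_inv_cancel₀ h0, one_smul]
    calc |a ⬝ᵥ A.mulVec z| = |(vnorm a • ((vnorm a)⁻¹ • a)) ⬝ᵥ A.mulVec z| := by rw [← ha]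
      _ = vnorm a * |((vnorm a)⁻¹ • a) ⬝ᵥ A.mulVec z| := by
          rw [smul_dotProduct, smul_eq_mul, abs_mul, abs_of_pos hpos]
      _ ≤ vnorm a * s := mul_le_mul_of_nonneg_left (hs _ _ hu hz) hpos.le

lemma dot_bound_right {n r : ℕ} (A : Matrix (Fin n) (Fin r) ℝ) (s : ℝ) (hs0 : 0 ≤ s)
    (hs : ∀ w z, vnorm w = 1 → vnorm z = 1 → |w ⬝ᵥ A.mulVec z| ≤ s)
    (w : Fin n → ℝ) (hw : vnorm w = 1) (b : Fin r → ℝ) :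
    |w ⬝ᵥ A.mulVec b| ≤ vnorm b * s := by
  by_cases h0 : vnorm b = 0
  · rw [vnorm_eq_zero h0]; simp [vnorm, hs0]
  · have hpos : 0 < vnorm b := lt_of_le_of_ne (vnorm_nonneg b) (Ne.symm h0)
    have hu : vnorm ((vnorm b)⁻¹ • b) = 1 := by
      rw [vnorm_smul, abs_inv, abs_of_pos hpos, inv_mul_cancel₀ h0]
    have hbb : b = vnorm b • ((vnorm b)⁻¹ • b) := by
      rw [smul_smul, mul_inv_cancel₀ h0, one_smul]
    calc |w ⬝ᵥ A.mulVec b| = |w ⬝ᵥ A.mulVec (vnorm b • ((vnorm b)⁻¹ • b))| := by rw [← hbb]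
      _ = vnorm b * |w ⬝ᵥ A.mulVec ((vnorm b)⁻¹ • b)| := by
          rw [Matrix.mulVec_smul, dotProduct_smul, smul_eq_mul, abs_mul, abs_of_pos hpos]
      _ ≤ vnorm b * s := mul_le_mul_of_nonneg_left (hs _ _ hw hu) hpos.le


end AuxNet

/-- **Proposition 4.3** (epsilon-net extension for the spectral norm of a random matrix). -/
theorem prop43 (n r : ℕ) (hn : 1 ≤ n) (hr : 1 ≤ r) (b₀ p₀ : ℝ) (hb : 0 ≤ b₀)
    (hp0 : 0 ≤ p₀) (hp1 : p₀ ≤ 1)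
    (Ω : Type) [MeasurableSpace Ω] (P : Measure Ω) [IsProbabilityMeasure P]
    (M : Ω → Fin n → Fin r → ℝ) (hM : Measurable M)
    (h : ∀ (w : Fin n → ℝ) (z : Fin r → ℝ), vnorm w = 1 → vnorm z = 1 →
      P {ω | b₀ < |w ⬝ᵥ (Matrix.of (M ω)).mulVec z|} ≤ ENNReal.ofReal p₀) :
    P {ω | ∃ (w : Fin n → ℝ) (z : Fin r → ℝ), vnorm w = 1 ∧ vnorm z = 1 ∧
        1.4 * b₀ < |w ⬝ᵥ (Matrix.of (M ω)).mulVec z|} ≤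
      (17 : ℝ≥0∞) ^ (n + r) * ENNReal.ofReal p₀ := by
  classical
  obtain ⟨Sw, hSwcard, hSw1, hSwnet⟩ := exists_net n hn
  obtain ⟨Sz, hSzcard, hSz1, hSznet⟩ := exists_net r hr
  have hsub : {ω | ∃ (w : Fin n → ℝ) (z : Fin r → ℝ), vnorm w = 1 ∧ vnorm z = 1 ∧
        1.4 * b₀ < |w ⬝ᵥ (Matrix.of (M ω)).mulVec z|} ⊆
      ⋃ p ∈ (Sw ×ˢ Sz : Finset _),
        {ω | b₀ < |(fun i => p.1 i) ⬝ᵥ (Matrix.of (M ω)).mulVec (fun j => p.2 j)|} := by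
    intro ω hω
    obtain ⟨w, z, hw, hz, hbig⟩ := hω
    set A := Matrix.of (M ω) with hA
    have hcont : Continuous (fun p : EuclideanSpace ℝ (Fin n) × EuclideanSpace ℝ (Fin r) =>
        |(fun i => p.1 i) ⬝ᵥ A.mulVec (fun j => p.2 j)|) := by
      have heq : (fun p : EuclideanSpace ℝ (Fin n) × EuclideanSpace ℝ (Fin r) =>
          (fun i => p.1 i) ⬝ᵥ A.mulVec (fun j => p.2 j))
          = fun p => ∑ i, ∑ j, p.1 i * (A i j * p.2 j) := by
        funext p
        simp [dotProduct, Matrix.mulVec, Finset.mul_sum]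
      refine Continuous.abs ?_
      rw [heq]
      refine continuous_finset_sum _ fun i _ => continuous_finset_sum _ fun j _ => ?_
      exact (((EuclideanSpace.proj i).continuous.comp continuous_fst).mul
        (continuous_const.mul ((EuclideanSpace.proj j).continuous.comp continuous_snd)))
    have hcomp : IsCompact ((sphere (0 : EuclideanSpace ℝ (Fin n)) 1) ×ˢ
        (sphere (0 : EuclideanSpace ℝ (Fin r)) 1)) :=
      (isCompact_sphere 0 1).prod (isCompact_sphere 0 1)
    have hne : ((sphere (0 : EuclideanSpace ℝ (Fin n)) 1) ×ˢ
        (sphere (0 : EuclideanSpace ℝ (Fin r)) 1)).Nonempty := by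
      refine ⟨(EuclideanSpace.single ⟨0, hn⟩ 1, EuclideanSpace.single ⟨0, hr⟩ 1), ?_, ?_⟩ <;>
        simp [mem_sphere_zero_iff_norm, EuclideanSpace.norm_single]
    obtain ⟨p, hpmem, hpmax⟩ := hcomp.exists_isMaxOn hne hcont.continuousOn
    set w0 : Fin n → ℝ := fun i => p.1 i with hw0def
    set z0 : Fin r → ℝ := fun j => p.2 j with hz0def
    set s := |w0 ⬝ᵥ A.mulVec z0| with hsdef
    have hs0 : 0 ≤ s := abs_nonneg _
    have hs : ∀ w' z', vnorm w' = 1 → vnorm z' = 1 → |w' ⬝ᵥ A.mulVec z'| ≤ s := by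
      intro w' z' hw' hz'
      have hmem : (WithLp.toLp 2 w', WithLp.toLp 2 z') ∈
          ((sphere (0 : EuclideanSpace ℝ (Fin n)) 1) ×ˢ
            (sphere (0 : EuclideanSpace ℝ (Fin r)) 1)) := by
        constructor
        · exact mem_sphere_zero_iff_norm.mpr ((vnorm_eq (WithLp.toLp 2 w')).symm.trans hw')
        · exact mem_sphere_zero_iff_norm.mpr ((vnorm_eq (WithLp.toLp 2 z')).symm.trans hz')
      exact hpmax hmem
    have hsb : 1.4 * b₀ < s := lt_of_lt_of_le hbig (hs w z hw hz)
    obtain ⟨w', hw'S, hw'd⟩ := hSwnet p.1 (mem_sphere_zero_iff_norm.mp hpmem.1)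
    obtain ⟨z', hz'S, hz'd⟩ := hSznet p.2 (mem_sphere_zero_iff_norm.mp hpmem.2)
    set wf : Fin n → ℝ := fun i => w' i with hwfdef
    set zf : Fin r → ℝ := fun j => z' j with hzfdef
    have hwfn : vnorm wf = 1 := (vnorm_eq w').trans (hSw1 w' hw'S)
    have hzfn : vnorm zf = 1 := (vnorm_eq z').trans (hSz1 z' hz'S)
    have hw0n : vnorm w0 = 1 := (vnorm_eq p.1).trans (mem_sphere_zero_iff_norm.mp hpmem.1)
    have hz0n : vnorm z0 = 1 := (vnorm_eq p.2).trans (mem_sphere_zero_iff_norm.mp hpmem.2)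
    have hdw : vnorm (w0 - wf) ≤ 1/8 := by
      have : vnorm (fun i => (p.1 - w') i) = ‖p.1 - w'‖ := vnorm_eq _
      calc vnorm (w0 - wf) = ‖p.1 - w'‖ := this
        _ = dist p.1 w' := (dist_eq_norm _ _).symm
        _ ≤ 1/8 := hw'd
    have hdz : vnorm (z0 - zf) ≤ 1/8 := by
      have : vnorm (fun j => (p.2 - z') j) = ‖p.2 - z'‖ := vnorm_eq _
      calc vnorm (z0 - zf) = ‖p.2 - z'‖ := this
        _ = dist p.2 z' := (dist_eq_norm _ _).symm
        _ ≤ 1/8 := hz'd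
    have hdecomp : w0 ⬝ᵥ A.mulVec z0 =
        (wf ⬝ᵥ A.mulVec zf) + ((w0 - wf) ⬝ᵥ A.mulVec z0) + (wf ⬝ᵥ A.mulVec (z0 - zf)) := by
      rw [sub_dotProduct, Matrix.mulVec_sub, dotProduct_sub]; ring
    have h1 : |(w0 - wf) ⬝ᵥ A.mulVec z0| ≤ (1/8) * s :=
      (dot_bound_left A s hs0 hs _ z0 hz0n).trans (mul_le_mul_of_nonneg_right hdw hs0)
    have h2 : |wf ⬝ᵥ A.mulVec (z0 - zf)| ≤ (1/8) * s :=
      (dot_bound_right A s hs0 hs wf hwfn _).trans (mul_le_mul_of_nonneg_right hdz hs0)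
    have hkey : s ≤ |wf ⬝ᵥ A.mulVec zf| + (1/8) * s + (1/8) * s := by
      calc s = |(wf ⬝ᵥ A.mulVec zf) + ((w0 - wf) ⬝ᵥ A.mulVec z0) +
            (wf ⬝ᵥ A.mulVec (z0 - zf))| := by rw [hsdef, hdecomp]
        _ ≤ |(wf ⬝ᵥ A.mulVec zf) + ((w0 - wf) ⬝ᵥ A.mulVec z0)| +
            |wf ⬝ᵥ A.mulVec (z0 - zf)| := abs_add_le _ _
        _ ≤ |wf ⬝ᵥ A.mulVec zf| + |(w0 - wf) ⬝ᵥ A.mulVec z0| +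
            |wf ⬝ᵥ A.mulVec (z0 - zf)| := by gcongr; exact abs_add_le _ _
        _ ≤ _ := by gcongr
    have hfinal : b₀ < |wf ⬝ᵥ A.mulVec zf| := by linarith
    refine Set.mem_iUnion₂.mpr ⟨(w', z'), Finset.mem_product.mpr ⟨hw'S, hz'S⟩, ?_⟩
    exact hfinal
  calc P {ω | ∃ (w : Fin n → ℝ) (z : Fin r → ℝ), vnorm w = 1 ∧ vnorm z = 1 ∧
        1.4 * b₀ < |w ⬝ᵥ (Matrix.of (M ω)).mulVec z|}
      ≤ P (⋃ p ∈ (Sw ×ˢ Sz : Finset _),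
        {ω | b₀ < |(fun i => p.1 i) ⬝ᵥ (Matrix.of (M ω)).mulVec (fun j => p.2 j)|}) :=
        measure_mono hsub
    _ ≤ ∑ p ∈ Sw ×ˢ Sz,
        P {ω | b₀ < |(fun i => p.1 i) ⬝ᵥ (Matrix.of (M ω)).mulVec (fun j => p.2 j)|} :=
        measure_biUnion_finset_le _ _
    _ ≤ ∑ _p ∈ Sw ×ˢ Sz, ENNReal.ofReal p₀ := by
        refine Finset.sum_le_sum fun p hp => ?_
        obtain ⟨hp1', hp2'⟩ := Finset.mem_product.mp hp
        exact h _ _ ((vnorm_eq p.1).trans (hSw1 _ hp1')) ((vnorm_eq p.2).trans (hSz1 _ hp2'))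
    _ = ((Sw ×ˢ Sz).card : ℝ≥0∞) * ENNReal.ofReal p₀ := by
        rw [Finset.sum_const, nsmul_eq_mul]
    _ ≤ (17 : ℝ≥0∞) ^ (n + r) * ENNReal.ofReal p₀ := by
        refine mul_le_mul_left ?_ _
        rw [Finset.card_product]
        calc ((Sw.card * Sz.card : ℕ) : ℝ≥0∞) ≤ ((17 ^ n * 17 ^ r : ℕ) : ℝ≥0∞) := by
              exact_mod_cast Nat.mul_le_mul hSwcard hSzcard
          _ = (17 : ℝ≥0∞) ^ (n + r) := by push_cast; rw [← pow_add]
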